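/- Let N ≥ 1, 1 < p < ∞ and q = p/(p−1). Let u ∈ L^p(ℝ^N) be nonnegative, let H_1, …, H_l ⊂ ℝ^N be closed halfspaces each containing 0, and let w ∈ L^q(ℝ^N) be nonnegative, radial and radially nonincreasing. Then ∫_{ℝ^N} u w ≤ ∫_{ℝ^N} ((…(u^{H_1})^{H_2}…)^{H_l}) w, i.e. the integral against w does not decrease under any finite sequence of polarizations by halfspaces containing 0. -/

import Mathlib

open MeasureTheory Filter

/-- Reflection across the boundary hyperplane `{x : ⟪a,x⟫ = b}` of the closed
halfspace `H = {x : ⟪a,x⟫ ≤ b}` (for `‖a‖ = 1`). -/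
noncomputable def reflectH {N : ℕ} (a : EuclideanSpace ℝ (Fin N)) (b : ℝ)
    (x : EuclideanSpace ℝ (Fin N)) : EuclideanSpace ℝ (Fin N) :=
  x - (2 * ((inner ℝ a x : ℝ) - b)) • a

section Helpers

variable {N : ℕ} {a : EuclideanSpace ℝ (Fin N)} {b : ℝ}

lemma inner_reflectH (ha : ‖a‖ = 1) (x : EuclideanSpace ℝ (Fin N)) :
    (inner ℝ a (reflectH a b x) : ℝ) = 2 * b - inner ℝ a x := by
  have h : (inner ℝ a a : ℝ) = 1 := by
    rw [real_inner_self_eq_norm_sq, ha]; norm_num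
  show (inner ℝ a (x - (2 * ((inner ℝ a x : ℝ) - b)) • a) : ℝ) = 2 * b - inner ℝ a x
  rw [inner_sub_right, real_inner_smul_right, h]
  ring

lemma reflectH_involutive (ha : ‖a‖ = 1) (x : EuclideanSpace ℝ (Fin N)) :
    reflectH a b (reflectH a b x) = x := by
  have h1 := inner_reflectH (b := b) ha x
  show reflectH a b x - (2 * ((inner ℝ a (reflectH a b x) : ℝ) - b)) • a = x
  rw [h1]
  show (x - (2 * ((inner ℝ a x : ℝ) - b)) • a) - (2 * (2 * b - (inner ℝ a x : ℝ) - b)) • a = x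
  rw [sub_sub, ← add_smul]
  have : (2 * ((inner ℝ a x : ℝ) - b)) + (2 * (2 * b - (inner ℝ a x : ℝ) - b)) = 0 := by ring
  rw [this, zero_smul, sub_zero]

lemma norm_reflectH_sq (ha : ‖a‖ = 1) (x : EuclideanSpace ℝ (Fin N)) :
    ‖reflectH a b x‖ ^ 2 = ‖x‖ ^ 2 + 4 * b * (b - (inner ℝ a x : ℝ)) := by
  have h := norm_sub_sq_real x ((2 * ((inner ℝ a x : ℝ) - b)) • a)
  have h2 : (inner ℝ x ((2 * ((inner ℝ a x : ℝ) - b)) • a) : ℝ)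
      = (2 * ((inner ℝ a x : ℝ) - b)) * (inner ℝ a x : ℝ) := by
    rw [real_inner_smul_right, real_inner_comm]
  have h3 : ‖(2 * ((inner ℝ a x : ℝ) - b)) • a‖ ^ 2 = (2 * ((inner ℝ a x : ℝ) - b)) ^ 2 := by
    rw [norm_smul, ha, mul_one, Real.norm_eq_abs, sq_abs]
  rw [show reflectH a b x = x - (2 * ((inner ℝ a x : ℝ) - b)) • a from rfl, h, h2, h3]
  ring

lemma norm_le_reflectH (ha : ‖a‖ = 1) (hb : 0 ≤ b) {x : EuclideanSpace ℝ (Fin N)}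
    (hx : (inner ℝ a x : ℝ) ≤ b) : ‖x‖ ≤ ‖reflectH a b x‖ := by
  have h := norm_reflectH_sq (b := b) ha x
  nlinarith [norm_nonneg x, norm_nonneg (reflectH a b x)]

lemma continuous_reflectH : Continuous (reflectH a b) := by
  unfold reflectH
  fun_prop

lemma measurableEmbedding_reflectH (ha : ‖a‖ = 1) :
    MeasurableEmbedding (reflectH a b) :=
  MeasurableEquiv.measurableEmbedding
    { toFun := reflectH a b, invFun := reflectH a b,
      left_inv := reflectH_involutive ha, right_inv := reflectH_involutive ha,
      measurable_toFun := continuous_reflectH.measurable,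
      measurable_invFun := continuous_reflectH.measurable }

lemma measurePreserving_reflectH (ha : ‖a‖ = 1) :
    MeasurePreserving (reflectH a b) volume volume := by
  have key : reflectH a b = (fun y => (2 * b) • a + y) ∘ ⇑(Submodule.reflection (ℝ ∙ a)ᗮ) := by
    funext x
    have hr : (Submodule.reflection (ℝ ∙ a)ᗮ) x = x - (2 * (inner ℝ a x : ℝ)) • a := by
      rw [Submodule.reflection_orthogonal_apply, Submodule.reflection_singleton_apply, ha]
      push_cast
      rw [two_smul]
      rw [neg_sub]
      rw [show (2 * (inner ℝ a x : ℝ)) • a = ((inner ℝ a x : ℝ) / 1 ^ 2) • a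
          + ((inner ℝ a x : ℝ) / 1 ^ 2) • a by rw [← add_smul]; congr 1; ring]
    show reflectH a b x = (2 * b) • a + (Submodule.reflection (ℝ ∙ a)ᗮ) x
    rw [hr]
    show x - (2 * ((inner ℝ a x : ℝ) - b)) • a = (2 * b) • a + (x - (2 * (inner ℝ a x : ℝ)) • a)
    rw [mul_sub, sub_smul]
    abel
  rw [key]
  exact (measurePreserving_add_left volume ((2 * b) • a)).comp
    (Submodule.reflection (ℝ ∙ a)ᗮ).measurePreserving


end Helpers

/-- Polarization (two-point rearrangement) of `u` with respect to the closed halfspace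
`H = {x : ⟪a,x⟫ ≤ b}` (for `‖a‖ = 1`). -/
noncomputable def polarization {N : ℕ} (a : EuclideanSpace ℝ (Fin N)) (b : ℝ)
    (u : EuclideanSpace ℝ (Fin N) → ℝ) (x : EuclideanSpace ℝ (Fin N)) : ℝ :=
  if (inner ℝ a x : ℝ) ≤ b then max (u x) (u (reflectH a b x))
  else min (u x) (u (reflectH a b x))

open scoped ENNReal in
lemma one_div_conj {p q : ℝ} (hp : 1 < p) (hq : q = p / (p - 1)) :
    1 / (1 : ℝ≥0∞) = 1 / ENNReal.ofReal q + 1 / ENNReal.ofReal p := by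
  have hp0 : (0:ℝ) < p := lt_trans one_pos hp
  have hp1 : (0:ℝ) < p - 1 := by linarith
  have hq0 : (0:ℝ) < q := by rw [hq]; positivity
  have hsum : q⁻¹ + p⁻¹ = 1 := by
    rw [hq]
    field_simp
    ring
  rw [one_div, one_div, one_div, inv_one,
    ← ENNReal.ofReal_inv_of_pos hq0, ← ENNReal.ofReal_inv_of_pos hp0,
    ← ENNReal.ofReal_add (by positivity) (by positivity), hsum, ENNReal.ofReal_one]

lemma integrable_mul_conj {N : ℕ} {p q : ℝ} (hp : 1 < p) (hq : q = p / (p - 1))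
    {f g : EuclideanSpace ℝ (Fin N) → ℝ}
    (hf : MemLp f (ENNReal.ofReal p) volume) (hg : MemLp g (ENNReal.ofReal q) volume) :
    Integrable (fun x => f x * g x) volume := by
  haveI : ENNReal.HolderTriple (ENNReal.ofReal q) (ENNReal.ofReal p) 1 :=
    ⟨by simpa only [one_div] using (one_div_conj hp hq).symm⟩
  have h := hf.smul (r := 1) hg
  rw [← memLp_one_iff_integrable]
  have h2 : (fun x => f x * g x) = g • f := by
    funext x; simp [Pi.smul_apply, smul_eq_mul, mul_comm]
  rw [h2]
  exact h

lemma polarization_step {N : ℕ} {a : EuclideanSpace ℝ (Fin N)} {b : ℝ}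
    (ha : ‖a‖ = 1) (hb : 0 ≤ b)
    {p q : ℝ} (hp : 1 < p) (hq : q = p / (p - 1))
    {v : EuclideanSpace ℝ (Fin N) → ℝ}
    (hv : MemLp v (ENNReal.ofReal p) volume) (hv0 : ∀ x, 0 ≤ v x)
    {w : EuclideanSpace ℝ (Fin N) → ℝ}
    (hw : MemLp w (ENNReal.ofReal q) volume) (hw0 : ∀ x, 0 ≤ w x)
    {W : ℝ → ℝ} (hW : AntitoneOn W (Set.Ici 0)) (hwW : ∀ x, w x = W ‖x‖) :
    MemLp (polarization a b v) (ENNReal.ofReal p) volume ∧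
      (∀ x, 0 ≤ polarization a b v x) ∧
      ∫ x, v x * w x ≤ ∫ x, polarization a b v x * w x := by
  classical
  set σ := reflectH a b with hσdef
  have hσ : MeasurePreserving σ volume volume := measurePreserving_reflectH ha
  have hemb : MeasurableEmbedding σ := measurableEmbedding_reflectH ha
  have hσσ : ∀ x, σ (σ x) = x := reflectH_involutive ha
  have hvσ : MemLp (v ∘ σ) (ENNReal.ofReal p) volume := hv.comp_measurePreserving hσ
  set P := polarization a b v with hPdef
  -- nonnegativity
  have hP0 : ∀ x, 0 ≤ P x := by
    intro x
    unfold P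
    unfold polarization
    split
    · exact le_max_of_le_left (hv0 x)
    · exact le_min (hv0 x) (hv0 _)
  -- measurability
  have hs : MeasurableSet {x : EuclideanSpace ℝ (Fin N) | (inner ℝ a x : ℝ) ≤ b} :=
    (isClosed_le (continuous_const.inner continuous_id) continuous_const).measurableSet
  have hPeq : P = Set.piecewise {x : EuclideanSpace ℝ (Fin N) | (inner ℝ a x : ℝ) ≤ b}
      (fun x => max (v x) (v (σ x))) (fun x => min (v x) (v (σ x))) := by
    funext x
    by_cases h : (inner ℝ a x : ℝ) ≤ b <;>
      simp [hPdef, polarization, Set.piecewise, h, hσdef]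
  have hmax : AEStronglyMeasurable (fun x => max (v x) (v (σ x))) volume :=
    hv.1.sup hvσ.1
  have hmin : AEStronglyMeasurable (fun x => min (v x) (v (σ x))) volume :=
    hv.1.inf hvσ.1
  have hPasm : AEStronglyMeasurable P volume := by
    rw [hPeq]
    exact AEStronglyMeasurable.piecewise hs hmax.restrict hmin.restrict
  -- P is in L^p
  have hPmem : MemLp P (ENNReal.ofReal p) volume := by
    refine MemLp.of_le (hv.add hvσ) hPasm (Filter.Eventually.of_forall fun x => ?_)
    have h1 : P x ≤ v x + v (σ x) := by
      unfold P
      unfold polarization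
      split
      · exact max_le (le_add_of_nonneg_right (hv0 _)) (le_add_of_nonneg_left (hv0 _))
      · exact (min_le_left _ _).trans (le_add_of_nonneg_right (hv0 _))
    have h2 : (0:ℝ) ≤ v x + v (σ x) := add_nonneg (hv0 _) (hv0 _)
    simp only [Real.norm_eq_abs, Function.comp, Pi.add_apply]
    rw [abs_of_nonneg (hP0 x), abs_of_nonneg h2]
    exact h1
  -- integrability
  have If : Integrable (fun x => v x * w x) volume := integrable_mul_conj hp hq hv hw
  have Ig : Integrable (fun x => P x * w x) volume := integrable_mul_conj hp hq hPmem hw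
  have Ifσ : Integrable (fun x => v (σ x) * w (σ x)) volume :=
    (hσ.integrable_comp_emb hemb).mpr If
  have Igσ : Integrable (fun x => P (σ x) * w (σ x)) volume :=
    (hσ.integrable_comp_emb hemb).mpr Ig
  -- pointwise nonnegativity of the symmetrized difference
  have hinner : ∀ x, (inner ℝ a (σ x) : ℝ) = 2 * b - inner ℝ a x := inner_reflectH ha
  have hwmono : ∀ x : EuclideanSpace ℝ (Fin N), (inner ℝ a x : ℝ) ≤ b → w (σ x) ≤ w x := by
    intro x hx
    rw [hwW x, hwW (σ x)]
    exact hW (Set.mem_Ici.mpr (norm_nonneg _)) (Set.mem_Ici.mpr (norm_nonneg _))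
      (norm_le_reflectH ha hb hx)
  have hnn : ∀ x, 0 ≤ (P x * w x + P (σ x) * w (σ x)) - (v x * w x + v (σ x) * w (σ x)) := by
    intro x
    by_cases h : (inner ℝ a x : ℝ) ≤ b
    · -- x ∈ H
      have hPx : P x = max (v x) (v (σ x)) := by
        unfold P; unfold polarization; rw [if_pos h]
      have hPσx : P (σ x) = min (v (σ x)) (v x) := by
        by_cases h2 : (inner ℝ a (σ x) : ℝ) ≤ b
        · -- then inner ℝ a x = b and σ x = x
          have hxb : (inner ℝ a x : ℝ) = b := by
            have h3 := h2
            rw [hinner x] at h3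
            linarith
          have hfix : σ x = x := by
            unfold σ
            show x - (2 * ((inner ℝ a x : ℝ) - b)) • a = x
            rw [hxb, sub_self, mul_zero, zero_smul, sub_zero]
          rw [hfix]
          unfold P; unfold polarization
          rw [if_pos h, show reflectH a b x = x from hfix]
          simp
        · unfold P; unfold polarization
          rw [if_neg h2, show reflectH a b (σ x) = x from hσσ x, min_comm]
      have hminmax : min (v (σ x)) (v x) = v x + v (σ x) - max (v x) (v (σ x)) := by
        rw [min_comm]
        have := min_add_max (v x) (v (σ x))
        linarith
      have h1 : v x ≤ max (v x) (v (σ x)) := le_max_left _ _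
      have h2 := hwmono x h
      rw [hPx, hPσx, hminmax]
      nlinarith
    · -- x ∉ H
      have hσH : (inner ℝ a (σ x) : ℝ) ≤ b := by
        rw [hinner x]; push_neg at h; linarith
      have hPx : P x = min (v x) (v (σ x)) := by
        unfold P; unfold polarization; rw [if_neg h]
      have hPσx : P (σ x) = max (v (σ x)) (v x) := by
        unfold P; unfold polarization; rw [if_pos hσH, show reflectH a b (σ x) = x from hσσ x]
      have hminmax : min (v x) (v (σ x)) = v x + v (σ x) - max (v (σ x)) (v x) := by
        have := min_add_max (v x) (v (σ x))
        rw [max_comm (v (σ x)) (v x)]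
        linarith
      have h1 : v (σ x) ≤ max (v (σ x)) (v x) := le_max_left _ _
      have h2 : w x ≤ w (σ x) := by
        have := hwmono (σ x) hσH
        rwa [hσσ x] at this
      rw [hPx, hPσx, hminmax]
      nlinarith
  -- integrate
  have hint : 0 ≤ ∫ x, ((P x * w x + P (σ x) * w (σ x)) - (v x * w x + v (σ x) * w (σ x))) :=
    integral_nonneg hnn
  have esplit : ∫ x, ((P x * w x + P (σ x) * w (σ x)) - (v x * w x + v (σ x) * w (σ x)))
      = ((∫ x, P x * w x) + ∫ x, P (σ x) * w (σ x))
        - ((∫ x, v x * w x) + ∫ x, v (σ x) * w (σ x)) := by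
    have IG : Integrable (fun x => P x * w x + P (σ x) * w (σ x)) volume := Ig.add Igσ
    have IF : Integrable (fun x => v x * w x + v (σ x) * w (σ x)) volume := If.add Ifσ
    rw [integral_sub IG IF, integral_add Ig Igσ, integral_add If Ifσ]
  have e1 : ∫ x, P (σ x) * w (σ x) = ∫ x, P x * w x :=
    hσ.integral_comp hemb (fun y => P y * w y)
  have e2 : ∫ x, v (σ x) * w (σ x) = ∫ x, v x * w x :=
    hσ.integral_comp hemb (fun y => v y * w y)
  rw [esplit, e1, e2] at hint
  exact ⟨hPmem, hP0, by linarith⟩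


/-- `polIter a b k u = ((u^{H_0})^{H_1}…)^{H_{k-1}}`: `u` polarized successively with respect
to the halfspaces `H_i = {x : ⟪a i, x⟫ ≤ b i}` for `i = 0, …, k-1`. -/
noncomputable def polIter {N : ℕ} (a : ℕ → EuclideanSpace ℝ (Fin N)) (b : ℕ → ℝ) :
    ℕ → (EuclideanSpace ℝ (Fin N) → ℝ) → EuclideanSpace ℝ (Fin N) → ℝ
  | 0, u => u
  | k + 1, u => polarization (a k) (b k) (polIter a b k u)

/-- For nonnegative `u ∈ L^p(ℝ^N)`, closed halfspaces `H_0, …, H_{l-1}` each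
containing `0`, and a nonnegative radial radially nonincreasing `w ∈ L^q(ℝ^N)`
(`q = p/(p-1)`), the integral `∫ u w` does not decrease under the finite sequence of
polarizations: `∫ u w ≤ ∫ ((…(u^{H_0})…)^{H_{l-1}}) w`. -/
theorem statement4 {N : ℕ} (hN : 1 ≤ N) (p q : ℝ) (hp : 1 < p) (hq : q = p / (p - 1))
    (u : EuclideanSpace ℝ (Fin N) → ℝ)
    (hu : MemLp u (ENNReal.ofReal p) volume) (hu0 : ∀ x, 0 ≤ u x)
    (l : ℕ) (a : ℕ → EuclideanSpace ℝ (Fin N)) (b : ℕ → ℝ)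
    (ha : ∀ k < l, ‖a k‖ = 1) (hb : ∀ k < l, 0 ≤ b k)
    (w : EuclideanSpace ℝ (Fin N) → ℝ)
    (hw : MemLp w (ENNReal.ofReal q) volume) (hw0 : ∀ x, 0 ≤ w x)
    (W : ℝ → ℝ) (hW : AntitoneOn W (Set.Ici 0)) (hwW : ∀ x, w x = W ‖x‖) :
    ∫ x, u x * w x ≤ ∫ x, polIter a b l u x * w x := by
  suffices H : ∀ m : ℕ, (∀ k < m, ‖a k‖ = 1) → (∀ k < m, 0 ≤ b k) →
      MemLp (polIter a b m u) (ENNReal.ofReal p) volume ∧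
        (∀ x, 0 ≤ polIter a b m u x) ∧
        ∫ x, u x * w x ≤ ∫ x, polIter a b m u x * w x by
    exact (H l ha hb).2.2
  intro m
  induction m with
  | zero =>
    intro _ _
    exact ⟨hu, hu0, le_refl _⟩
  | succ k ih =>
    intro ha' hb'
    obtain ⟨h1, h2, h3⟩ := ih (fun j hj => ha' j (hj.trans (Nat.lt_succ_self k)))
      (fun j hj => hb' j (hj.trans (Nat.lt_succ_self k)))
    obtain ⟨m1, m2, m3⟩ := polarization_step (ha' k (Nat.lt_succ_self k))
      (hb' k (Nat.lt_succ_self k)) hp hq h1 h2 hw hw0 hW hwW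
    exact ⟨m1, m2, h3.trans m3⟩
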